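/- Fix T > 0, jump times 0 < t₁ < ⋯ < t_n ≤ T, a measurable path X : [0,T] → ℝ^K, and ḡ ∈ [0,∞). Let f, h : ℝ^K → ℝ be measurable with sup_x |f(x)| ≤ ḡ and sup_x |h(x)| ≤ ḡ. Then for every t ∈ [0,1], L_T(f + t(h − f)) ≥ L_T(f) + t·D_T(f, h − f) − 2t²·T·e^{ḡ}·ḡ². -/

import Mathlib

open MeasureTheory

lemma L1 {x : ℝ} (hx : x ≤ 0) : Real.exp x ≤ 1 + x + x ^ 2 / 2 := by
  have key : ∀ y : ℝ, HasDerivAt (fun y => 1 + y + y ^ 2 / 2 - Real.exp y)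
      (1 + y - Real.exp y) y := by
    intro y
    have h1 : HasDerivAt (fun y : ℝ => 1 + y) 1 y := (hasDerivAt_id y).const_add 1
    have h2 : HasDerivAt (fun y : ℝ => y ^ 2 / 2) y y := by
      simpa using (hasDerivAt_pow 2 y).div_const 2
    exact ((h1.add h2).sub (Real.hasDerivAt_exp y))
  have hanti : Antitone (fun y => 1 + y + y ^ 2 / 2 - Real.exp y) := by
    apply antitone_of_deriv_nonpos
    · exact fun y => (key y).differentiableAt
    · intro y
      rw [(key y).deriv]
      have := Real.add_one_le_exp y
      linarith
  have := hanti hx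
  simp only at this
  simp at this
  linarith [this]

lemma L2 {x : ℝ} (hx : 0 ≤ x) :
    Real.exp x - 1 - x ≤ x ^ 2 / 2 * Real.exp x := by
  have key : ∀ y : ℝ, HasDerivAt (fun y => y ^ 2 / 2 * Real.exp y - (Real.exp y - 1 - y))
      (y * Real.exp y + y ^ 2 / 2 * Real.exp y - (Real.exp y - 1)) y := by
    intro y
    have h2 : HasDerivAt (fun y : ℝ => y ^ 2 / 2) y y := by
      simpa using (hasDerivAt_pow 2 y).div_const 2
    have h3 : HasDerivAt (fun y : ℝ => y ^ 2 / 2 * Real.exp y)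
        (y * Real.exp y + y ^ 2 / 2 * Real.exp y) y := by
      exact h2.mul (Real.hasDerivAt_exp y)
    have h4 : HasDerivAt (fun y : ℝ => Real.exp y - 1 - y) (Real.exp y - 1) y := by
      exact ((Real.hasDerivAt_exp y).sub_const 1).sub (hasDerivAt_id y)
    exact h3.sub h4
  have hmono : Monotone (fun y => y ^ 2 / 2 * Real.exp y - (Real.exp y - 1 - y)) := by
    apply monotone_of_deriv_nonneg
    · exact fun y => (key y).differentiableAt
    · intro y
      rw [(key y).deriv]
      have h1 : (1 - y) * Real.exp y ≤ 1 := by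
        have := Real.add_one_le_exp (-y)
        have hp := Real.exp_pos y
        have : (1 - y) * Real.exp y ≤ Real.exp (-y) * Real.exp y := by
          apply mul_le_mul_of_nonneg_right _ hp.le; linarith
        rwa [← Real.exp_add, neg_add_cancel, Real.exp_zero] at this
      have hy2 : 0 ≤ y ^ 2 / 2 * Real.exp y := by positivity
      nlinarith [Real.exp_pos y]
  have := hmono hx
  simp only at this
  simp at this
  linarith [this]

lemma keyPt {gbar a b t : ℝ} (ha : |a| ≤ gbar) (hb : |b| ≤ gbar)
    (ht0 : 0 ≤ t) (ht1 : t ≤ 1) :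
    Real.exp (a + t * (b - a)) ≤
      Real.exp a + t * (b - a) * Real.exp a + 2 * t ^ 2 * Real.exp gbar * gbar ^ 2 := by
  obtain ⟨ha1, ha2⟩ := abs_le.mp ha
  obtain ⟨hb1, hb2⟩ := abs_le.mp hb
  set x := t * (b - a) with hxdef
  have hba : (b - a) ^ 2 ≤ 4 * gbar ^ 2 := by nlinarith
  have hx2 : x ^ 2 ≤ 4 * t ^ 2 * gbar ^ 2 := by
    rw [hxdef, mul_pow]
    have := mul_le_mul_of_nonneg_left hba (sq_nonneg t)
    linarith
  have hexpa : Real.exp a ≤ Real.exp gbar := Real.exp_le_exp.mpr ha2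
  have hsum : a + x ≤ gbar := by rw [hxdef]; nlinarith
  have hexpax : Real.exp (a + x) ≤ Real.exp gbar := Real.exp_le_exp.mpr hsum
  have hrw : Real.exp (a + x) = Real.exp a * Real.exp x := Real.exp_add a x
  rcases le_or_gt x 0 with hx | hx
  · have h1 := L1 hx
    have : Real.exp a * Real.exp x ≤ Real.exp a * (1 + x + x ^ 2 / 2) :=
      mul_le_mul_of_nonneg_left h1 (Real.exp_pos a).le
    rw [hrw]
    have h3 : Real.exp a * (x ^ 2 / 2) ≤ Real.exp gbar * (4 * t ^ 2 * gbar ^ 2 / 2) := by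
      apply mul_le_mul hexpa (by linarith) (by positivity) (Real.exp_pos gbar).le
    nlinarith [Real.exp_pos a]
  · have h2 := L2 hx.le
    -- exp a * (exp x - 1 - x) ≤ exp a * (x^2/2 * exp x) = x^2/2 * exp(a+x) ≤ x^2/2 * exp gbar
    have h3 : Real.exp a * (Real.exp x - 1 - x) ≤ x ^ 2 / 2 * Real.exp (a + x) := by
      rw [hrw]
      have := mul_le_mul_of_nonneg_left h2 (Real.exp_pos a).le
      nlinarith
    have h4 : x ^ 2 / 2 * Real.exp (a + x) ≤ (4 * t ^ 2 * gbar ^ 2 / 2) * Real.exp gbar := by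
      apply mul_le_mul (by linarith) hexpax (Real.exp_pos _).le (by positivity)
    rw [hrw]
    nlinarith [Real.exp_pos a]

/-- The sample log-likelihood `L_T(g) = ∑ᵢ g(X(tᵢ)) - ∫₀ᵀ exp(g(X(t))) dt`. -/
noncomputable def sampleLogLik (K : ℕ) (T : ℝ) (n : ℕ) (t : Fin n → ℝ)
    (X : ℝ → (Fin K → ℝ)) (g : (Fin K → ℝ) → ℝ) : ℝ :=
  (∑ i, g (X (t i))) - ∫ s in (0 : ℝ)..T, Real.exp (g (X s))

/-- The directional derivative
`D_T(g,h) = ∑ᵢ h(X(tᵢ)) - ∫₀ᵀ h(X(t)) exp(g(X(t))) dt`. -/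
noncomputable def dirDeriv (K : ℕ) (T : ℝ) (n : ℕ) (t : Fin n → ℝ)
    (X : ℝ → (Fin K → ℝ)) (g h : (Fin K → ℝ) → ℝ) : ℝ :=
  (∑ i, h (X (t i))) - ∫ s in (0 : ℝ)..T, h (X s) * Real.exp (g (X s))

lemma bddIntegrable {F : ℝ → ℝ} (hF : Measurable F) {C : ℝ} (hC0 : 0 ≤ C)
    (hC : ∀ s, |F s| ≤ C) (a b : ℝ) : IntervalIntegrable F volume a b := by
  apply (intervalIntegrable_const (c := C)).mono_fun hF.aestronglyMeasurable.restrict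
  filter_upwards with s
  simpa [abs_of_nonneg hC0] using hC s

/-- Curvature lower bound from the proof of Theorem 3: for measurable `f, h` bounded
by `ḡ` and `t ∈ [0,1]`,
`L_T(f + t(h - f)) ≥ L_T(f) + t D_T(f, h - f) - 2 t² T e^{ḡ} ḡ²`. -/
theorem stmt_9 (K : ℕ) (T : ℝ) (hT : 0 < T) (n : ℕ) (tj : Fin n → ℝ)
    (htj : StrictMono tj) (htj0 : ∀ i, 0 < tj i) (htjT : ∀ i, tj i ≤ T)
    (X : ℝ → (Fin K → ℝ)) (hX : Measurable X)
    (gbar : ℝ) (hgbar : 0 ≤ gbar)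
    (f h : (Fin K → ℝ) → ℝ) (hf : Measurable f) (hh : Measurable h)
    (hfb : ∀ x, |f x| ≤ gbar) (hhb : ∀ x, |h x| ≤ gbar) :
    ∀ t : ℝ, t ∈ Set.Icc (0 : ℝ) 1 →
      sampleLogLik K T n tj X (fun x => f x + t * (h x - f x)) ≥
        sampleLogLik K T n tj X f + t * dirDeriv K T n tj X f (fun x => h x - f x) -
          2 * t ^ 2 * T * Real.exp gbar * gbar ^ 2 := by
  intro t ht
  obtain ⟨ht0, ht1⟩ := ht
  -- measurability
  have hfX : Measurable fun s => f (X s) := hf.comp hX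
  have hhX : Measurable fun s => h (X s) := hh.comp hX
  -- integrands
  set c : ℝ := 2 * t ^ 2 * Real.exp gbar * gbar ^ 2 with hc
  have hc0 : 0 ≤ c := by positivity
  -- integrability of exp(f∘X)
  have hI1 : IntervalIntegrable (fun s => Real.exp (f (X s))) volume 0 T := by
    apply bddIntegrable (Real.measurable_exp.comp hfX) (Real.exp_pos gbar).le
    intro s
    simp only [Function.comp_apply]
    rw [abs_of_pos (Real.exp_pos _)]
    exact Real.exp_le_exp.mpr (abs_le.mp (hfb (X s))).2
  -- integrability of (h-f)·exp(f∘X)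
  have hI2 : IntervalIntegrable (fun s => (h (X s) - f (X s)) * Real.exp (f (X s)))
      volume 0 T := by
    apply bddIntegrable ((hhX.sub hfX).mul (Real.measurable_exp.comp hfX))
      (by positivity : (0:ℝ) ≤ 2 * gbar * Real.exp gbar)
    intro s
    show |(h (X s) - f (X s)) * Real.exp (f (X s))| ≤ 2 * gbar * Real.exp gbar
    rw [abs_mul, abs_of_pos (Real.exp_pos _)]
    have h1 : |h (X s) - f (X s)| ≤ 2 * gbar := by
      have := hfb (X s); have := hhb (X s)
      calc |h (X s) - f (X s)| ≤ |h (X s)| + |f (X s)| := abs_sub _ _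
        _ ≤ 2 * gbar := by linarith
    have h2 : Real.exp (f (X s)) ≤ Real.exp gbar :=
      Real.exp_le_exp.mpr (abs_le.mp (hfb (X s))).2
    exact mul_le_mul h1 h2 (Real.exp_pos _).le (by positivity)
  -- integrability of the perturbed exponential
  have hI3 : IntervalIntegrable (fun s => Real.exp (f (X s) + t * (h (X s) - f (X s))))
      volume 0 T := by
    apply bddIntegrable (Real.measurable_exp.comp (hfX.add (measurable_const.mul (hhX.sub hfX))))
      (Real.exp_pos gbar).le
    intro s
    simp only [Function.comp_apply]
    show |Real.exp (f (X s) + t * (h (X s) - f (X s)))| ≤ Real.exp gbar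
    rw [abs_of_pos (Real.exp_pos _)]
    apply Real.exp_le_exp.mpr
    obtain ⟨ha1, ha2⟩ := abs_le.mp (hfb (X s))
    obtain ⟨hb1, hb2⟩ := abs_le.mp (hhb (X s))
    nlinarith
  -- monotone comparison of integrals
  have hmono : (∫ s in (0:ℝ)..T, Real.exp (f (X s) + t * (h (X s) - f (X s)))) ≤
      ∫ s in (0:ℝ)..T,
        (Real.exp (f (X s)) + t * ((h (X s) - f (X s)) * Real.exp (f (X s))) + c) := by
    apply intervalIntegral.integral_mono_on hT.le hI3
      ((hI1.add (hI2.const_mul t)).add intervalIntegrable_const)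
    intro s _
    have := keyPt (hfb (X s)) (hhb (X s)) ht0 ht1
    rw [hc]
    nlinarith [this]
  have hsplit : (∫ s in (0:ℝ)..T,
      (Real.exp (f (X s)) + t * ((h (X s) - f (X s)) * Real.exp (f (X s))) + c)) =
      (∫ s in (0:ℝ)..T, Real.exp (f (X s))) +
      t * (∫ s in (0:ℝ)..T, (h (X s) - f (X s)) * Real.exp (f (X s))) + c * T := by
    rw [intervalIntegral.integral_add (hI1.add (hI2.const_mul t)) intervalIntegrable_const,
      intervalIntegral.integral_add hI1 (hI2.const_mul t),
      intervalIntegral.integral_const_mul, intervalIntegral.integral_const]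
    simp [smul_eq_mul]
    ring
  -- sums
  simp only [sampleLogLik, dirDeriv, ge_iff_le]
  have hsum : (∑ i, (f (X (tj i)) + t * (h (X (tj i)) - f (X (tj i))))) =
      (∑ i, f (X (tj i))) + t * ∑ i, (h (X (tj i)) - f (X (tj i))) := by
    rw [Finset.sum_add_distrib, Finset.mul_sum]
  rw [hsum]
  have key : (∫ s in (0:ℝ)..T, Real.exp (f (X s) + t * (h (X s) - f (X s)))) ≤
      (∫ s in (0:ℝ)..T, Real.exp (f (X s))) +
      t * (∫ s in (0:ℝ)..T, (h (X s) - f (X s)) * Real.exp (f (X s))) + c * T := by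
    rw [← hsplit]; exact hmono
  rw [hc] at key
  linarith
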